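/- Let X be a normal topological space with covering dimension at most n. For every continuous map f : X → ℝ^{n+1} and every continuous function ε : X → ℝ_{>0}, there exists a continuous map g : X → ℝ^{n+1} such that for all x ∈ X, ‖g(x) − f(x)‖ ≤ 2√(n+1)·ε(x) and g(x) ≠ 0. -/

import Mathlib

open Set

lemma exists_mem_open_avoiding_spans {m : ℕ} (R : Set (Fin m → ℝ)) (hR : IsOpen R)
    (hne : R.Nonempty) (S : Finset (Finset (Fin m → ℝ)))
    (hS : ∀ T ∈ S, Submodule.span ℝ (T : Set (Fin m → ℝ)) ≠ ⊤) :
    ∃ v ∈ R, ∀ T ∈ S, v ∉ Submodule.span ℝ (T : Set (Fin m → ℝ)) := by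
  classical
  have hdense : Dense (⋂ T ∈ S, ((Submodule.span ℝ (T : Set (Fin m → ℝ)) : Set (Fin m → ℝ)))ᶜ) := by
    clear hne
    induction S using Finset.induction_on with
    | empty => simp
    | @insert T S' hT ih =>
        rw [Finset.set_biInter_insert]
        have hclosed : IsClosed (Submodule.span ℝ (T : Set (Fin m → ℝ)) : Set (Fin m → ℝ)) :=
          Submodule.closed_of_finiteDimensional _
        have h1 : Dense ((Submodule.span ℝ (T : Set (Fin m → ℝ)) : Set (Fin m → ℝ)))ᶜ := by
          have hint : interior (Submodule.span ℝ (T : Set (Fin m → ℝ)) : Set (Fin m → ℝ)) = ∅ := by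
            by_contra h
            exact hS T (Finset.mem_insert_self _ _)
              (Submodule.eq_top_of_nonempty_interior' _ (nonempty_iff_ne_empty.2 h))
          rwa [interior_eq_empty_iff_dense_compl] at hint
        exact h1.inter_of_isOpen_left (ih fun T' hT' => hS T' (Finset.mem_insert_of_mem hT'))
          (isOpen_compl_iff.2 hclosed)
  obtain ⟨v, hvR, hv⟩ := hdense.inter_open_nonempty R hR hne
  exact ⟨v, hvR, fun T hT => Set.mem_iInter₂.1 hv T hT⟩

/-- Vectors in prescribed sign regions, in "general position": no vector lies in the span
of at most `n` earlier ones. -/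
lemma exists_generic_vectors (n : ℕ) :
    ∀ (N : ℕ) (lab : Fin N → Fin (n + 1) → Fin 3),
      ∃ w : Fin N → (Fin (n + 1) → ℝ),
        (∀ k i, lab k i = 0 → w k i < 0) ∧
        (∀ k i, lab k i = 2 → 0 < w k i) ∧
        (∀ (k : Fin N) (S : Finset (Fin N)), (∀ b ∈ S, b < k) → S.card ≤ n →
          w k ∉ Submodule.span ℝ ((S.image w : Finset (Fin (n + 1) → ℝ)) : Set (Fin (n + 1) → ℝ))) := by
  intro N
  induction N with
  | zero => exact fun lab => ⟨fun k => k.elim0, fun k => k.elim0, fun k => k.elim0, fun k => k.elim0⟩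
  | succ N ih =>
    intro lab
    classical
    obtain ⟨w0, hneg, hpos, hspan⟩ := ih (fun k => lab k.castSucc)
    set R : Set (Fin (n + 1) → ℝ) :=
      ⋂ i, (if lab (Fin.last N) i = 0 then {v : Fin (n + 1) → ℝ | v i < 0}
        else if lab (Fin.last N) i = 2 then {v : Fin (n + 1) → ℝ | 0 < v i} else univ) with hRdef
    have hRopen : IsOpen R := by
      refine isOpen_iInter_of_finite fun i => ?_
      split_ifs
      · exact isOpen_lt (continuous_apply i) continuous_const
      · exact isOpen_lt continuous_const (continuous_apply i)
      · exact isOpen_univ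
    have hRne : R.Nonempty := by
      refine ⟨fun i => if lab (Fin.last N) i = 0 then (-1 : ℝ) else 1, ?_⟩
      refine Set.mem_iInter.2 fun i => ?_
      split_ifs with h1 h2
      · simpa [h1] using by norm_num
      · simp only [mem_setOf_eq, h1, if_neg h1]
        norm_num
      · trivial
    set 𝒮 : Finset (Finset (Fin (n + 1) → ℝ)) :=
      (Finset.univ.image w0).powerset.filter (fun T => T.card ≤ n) with h𝒮
    have h𝒮proper : ∀ T ∈ 𝒮, Submodule.span ℝ (T : Set (Fin (n + 1) → ℝ)) ≠ ⊤ := by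
      intro T hT
      have hcard : T.card ≤ n := (Finset.mem_filter.1 hT).2
      have : (T : Set (Fin (n + 1) → ℝ)).toFinset.card < Module.finrank ℝ (Fin (n + 1) → ℝ) := by
        rw [Finset.toFinset_coe]
        have : Module.finrank ℝ (Fin (n + 1) → ℝ) = n + 1 := by
          simp [Module.finrank_pi]
        omega
      exact (span_lt_top_of_card_lt_finrank this).ne
    obtain ⟨v, hvR, hv𝒮⟩ := exists_mem_open_avoiding_spans R hRopen hRne 𝒮 h𝒮proper
    refine ⟨Fin.snoc w0 v, ?_, ?_, ?_⟩
    · intro k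
      refine Fin.lastCases ?_ ?_ k
      · intro i h'
        rw [Fin.snoc_last]
        have hm := Set.mem_iInter.1 hvR i
        rwa [if_pos h'] at hm
      · intro k0 i h'
        rw [Fin.snoc_castSucc]
        exact hneg k0 i h'
    · intro k
      refine Fin.lastCases ?_ ?_ k
      · intro i h'
        rw [Fin.snoc_last]
        have hm := Set.mem_iInter.1 hvR i
        rwa [if_neg (by rw [h']; decide), if_pos h'] at hm
      · intro k0 i h'
        rw [Fin.snoc_castSucc]
        exact hpos k0 i h'
    · intro k
      refine Fin.lastCases ?_ ?_ k
      · intro S hSlt hcard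
        rw [Fin.snoc_last]
        refine hv𝒮 _ ?_
        refine Finset.mem_filter.2 ⟨Finset.mem_powerset.2 ?_,
          le_trans Finset.card_image_le hcard⟩
        intro y hy
        obtain ⟨b, hb, rfl⟩ := Finset.mem_image.1 hy
        obtain ⟨b0, rfl⟩ := Fin.exists_castSucc_eq.2 (ne_of_lt (hSlt b hb))
        rw [Fin.snoc_castSucc]
        exact Finset.mem_image_of_mem w0 (Finset.mem_univ b0)
      · intro k0 S hSlt hcard
        rw [Fin.snoc_castSucc]
        set S0 : Finset (Fin N) := Finset.univ.filter (fun b0 => b0.castSucc ∈ S) with hS0def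
        have hSeq : S = S0.image Fin.castSucc := by
          ext b
          constructor
          · intro hb
            have hblast : b ≠ Fin.last N :=
              ne_of_lt (lt_trans (hSlt b hb) (Fin.castSucc_lt_last k0))
            obtain ⟨b0, rfl⟩ := Fin.exists_castSucc_eq.2 hblast
            exact Finset.mem_image_of_mem _ (Finset.mem_filter.2 ⟨Finset.mem_univ _, hb⟩)
          · intro hb
            obtain ⟨b0, hb0, rfl⟩ := Finset.mem_image.1 hb
            exact (Finset.mem_filter.1 hb0).2
        have hcard0 : S0.card ≤ n := by
          rw [hSeq, Finset.card_image_of_injective _ (Fin.castSucc_injective N)] at hcard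
          exact hcard
        have hlt0 : ∀ b0 ∈ S0, b0 < k0 := fun b0 hb0 =>
          Fin.castSucc_lt_castSucc_iff.1 (hSlt _ (Finset.mem_filter.1 hb0).2)
        have himg : S.image (Fin.snoc w0 v) = S0.image w0 := by
          rw [hSeq, Finset.image_image]
          exact Finset.image_congr fun b0 _ => by simp [Fin.snoc_castSucc]
        rw [himg]
        exact hspan k0 S0 hlt0 hcard0

/-- Key combinatorial lemma: vectors with prescribed sign patterns such that no nonnegative,
nontrivial combination supported on at most `n + 1` of them vanishes. -/
lemma exists_generic_vectors' (n N : ℕ) (lab : Fin N → Fin (n + 1) → Fin 3) :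
    ∃ w : Fin N → (Fin (n + 1) → ℝ),
      (∀ k i, lab k i = 0 → w k i < 0) ∧
      (∀ k i, lab k i = 2 → 0 < w k i) ∧
      ∀ p : Fin N → ℝ, (∀ k, 0 ≤ p k) → (∃ k, p k ≠ 0) →
        (Finset.univ.filter fun k => p k ≠ 0).card ≤ n + 1 → ∑ k, p k • w k ≠ 0 := by
  classical
  obtain ⟨w, h0, h2, hspan⟩ := exists_generic_vectors n N lab
  refine ⟨w, h0, h2, ?_⟩
  intro p hp hex hcard hsum
  set supp := Finset.univ.filter (fun k => p k ≠ 0) with hsuppdef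
  have hne : supp.Nonempty := by
    obtain ⟨k, hk⟩ := hex
    exact ⟨k, Finset.mem_filter.2 ⟨Finset.mem_univ _, hk⟩⟩
  set c := supp.max' hne with hcdef
  have hcmem : c ∈ supp := supp.max'_mem hne
  have hpc : p c ≠ 0 := (Finset.mem_filter.1 hcmem).2
  have hsum2 : ∑ k ∈ supp, p k • w k = 0 := by
    rw [hsuppdef, Finset.sum_filter_of_ne]
    · exact hsum
    · intro k _ hk
      by_contra h
      rw [h, zero_smul] at hk
      exact hk rfl
  have hsplit : p c • w c + ∑ k ∈ supp.erase c, p k • w k = 0 := by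
    rw [Finset.add_sum_erase supp (fun k => p k • w k) hcmem]; exact hsum2
  have hwc : w c = (p c)⁻¹ • (-(∑ k ∈ supp.erase c, p k • w k)) := by
    rw [← eq_neg_of_add_eq_zero_left hsplit, inv_smul_smul₀ hpc]
  have hmem : w c ∈ Submodule.span ℝ (((supp.erase c).image w : Finset (Fin (n+1) → ℝ)) : Set (Fin (n+1) → ℝ)) := by
    rw [hwc]
    refine Submodule.smul_mem _ _ (Submodule.neg_mem _ (Submodule.sum_mem _ fun k hk => ?_))
    exact Submodule.smul_mem _ _ (Submodule.subset_span (Finset.mem_coe.2 (Finset.mem_image_of_mem w hk)))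
  refine hspan c (supp.erase c) (fun b hb => ?_) ?_ hmem
  · exact lt_of_le_of_ne (supp.le_max' b (Finset.mem_of_mem_erase hb)) (Finset.ne_of_mem_erase hb)
  · have := Finset.card_erase_of_mem hcmem
    have hsc : supp.card ≤ n + 1 := hcard
    omega

/-- `X` has Lebesgue covering dimension at most `n`: every open cover admits an
open refinement in which every point lies in at most `n + 1` members. -/
def CovDimLE (X : Type*) [TopologicalSpace X] (n : ℕ) : Prop :=
  ∀ (ι : Type) (U : ι → Set X), (∀ i, IsOpen (U i)) → (⋃ i, U i) = Set.univ →
    ∃ (κ : Type) (V : κ → Set X), (∀ j, IsOpen (V j)) ∧ (⋃ j, V j) = Set.univ ∧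
      (∀ j, ∃ i, V j ⊆ U i) ∧
      ∀ x : X, {j | x ∈ V j}.Finite ∧ {j | x ∈ V j}.ncard ≤ n + 1

/-- Over a normal space of covering dimension at most `n`, any continuous map to
`ℝ^{n+1}` may be perturbed by at most `2√(n+1)·ε(x)` pointwise so as to avoid `0`. -/
theorem avoid_zero_of_covDimLE
    (n : ℕ) (X : Type*) [TopologicalSpace X] [NormalSpace X] (hdim : CovDimLE X n)
    (f : X → EuclideanSpace ℝ (Fin (n + 1))) (hf : Continuous f)
    (ε : X → ℝ) (hε : Continuous ε) (hεpos : ∀ x, 0 < ε x) :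
    ∃ g : X → EuclideanSpace ℝ (Fin (n + 1)), Continuous g ∧
      ∀ x, ‖g x - f x‖ ≤ 2 * Real.sqrt (n + 1) * ε x ∧ g x ≠ 0 := by
  classical
  -- coordinate functions of `f` are continuous
  have hfi : ∀ i, Continuous fun x => f x i := fun i =>
    (continuous_apply i).comp ((PiLp.continuous_ofLp 2 fun _ : Fin (n + 1) => ℝ).comp hf)
  -- the three basic "slabs" in each coordinate
  set T : Fin 3 → Fin (n + 1) → Set X := fun t i =>
    if t = 0 then {x | f x i < -ε x / 3}
    else if t = 2 then {x | ε x / 3 < f x i}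
    else {x | |f x i| < ε x} with hTdef
  have hT0 : ∀ i, T 0 i = {x | f x i < -ε x / 3} := fun i => if_pos rfl
  have hT1 : ∀ i, T 1 i = {x | |f x i| < ε x} := fun i => by
    simp only [hTdef]
    rw [if_neg (by decide), if_neg (by decide)]
  have hT2 : ∀ i, T 2 i = {x | ε x / 3 < f x i} := fun i => by
    simp only [hTdef]
    rw [if_neg (by decide)]
    simp
  have hTopen : ∀ t i, IsOpen (T t i) := by
    intro t i
    simp only [hTdef]
    split_ifs
    · exact isOpen_lt (hfi i) ((hε.neg).div_const 3)
    · exact isOpen_lt (hε.div_const 3) (hfi i)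
    · exact isOpen_lt ((hfi i).abs) hε
  -- if `f x i ≤ -ε x` then `x` is only in the `0` slab, etc.
  have hTneg : ∀ (x : X) i (t : Fin 3), x ∈ T t i → f x i ≤ -ε x → t = 0 := by
    intro x i t hx hfx
    rcases (by decide : ∀ s : Fin 3, s = 0 ∨ s = 1 ∨ s = 2) t with rfl | rfl | rfl
    · rfl
    · rw [hT1] at hx
      rw [Set.mem_setOf_eq, abs_lt] at hx
      exfalso; linarith [hx.1]
    · rw [hT2] at hx
      rw [Set.mem_setOf_eq] at hx
      exfalso; nlinarith [hεpos x]
  have hTpos : ∀ (x : X) i (t : Fin 3), x ∈ T t i → ε x ≤ f x i → t = 2 := by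
    intro x i t hx hfx
    rcases (by decide : ∀ s : Fin 3, s = 0 ∨ s = 1 ∨ s = 2) t with rfl | rfl | rfl
    · rw [hT0] at hx
      rw [Set.mem_setOf_eq] at hx
      exfalso; nlinarith [hεpos x]
    · rw [hT1] at hx
      rw [Set.mem_setOf_eq, abs_lt] at hx
      exfalso; linarith [hx.2]
    · rfl
  -- the canonical finite open cover indexed by labels
  set N := Fintype.card (Fin (n + 1) → Fin 3) with hNdef
  set e : (Fin (n + 1) → Fin 3) ≃ Fin N := Fintype.equivFin _ with hedef
  set lab : Fin N → Fin (n + 1) → Fin 3 := fun k => e.symm k with hlabdef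
  set U : Fin N → Set X := fun k => ⋂ i, T (lab k i) i with hUdef
  have hUopen : ∀ k, IsOpen (U k) := fun k => isOpen_iInter_of_finite fun i => hTopen _ i
  have hUcover : ⋃ k, U k = Set.univ := by
    refine Set.eq_univ_of_forall fun x => Set.mem_iUnion.2 ?_
    set c : Fin (n + 1) → Fin 3 := fun i =>
      if f x i < -ε x / 3 then 0 else if ε x / 3 < f x i then 2 else 1 with hcdef
    refine ⟨e c, ?_⟩
    have hlabc : lab (e c) = c := e.symm_apply_apply c
    rw [hUdef]
    simp only [hlabc]
    refine Set.mem_iInter.2 fun i => ?_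
    by_cases h1 : f x i < -ε x / 3
    · have : c i = 0 := by rw [hcdef]; simp [h1]
      rw [this, hT0]; exact h1
    · by_cases h2 : ε x / 3 < f x i
      · have : c i = 2 := by rw [hcdef]; simp [h1, h2]
        rw [this, hT2]; exact h2
      · have : c i = 1 := by rw [hcdef]; simp [h1, h2]
        rw [this, hT1]
        rw [Set.mem_setOf_eq, abs_lt]
        constructor <;> [linarith [hεpos x, not_lt.1 h1]; linarith [hεpos x, not_lt.1 h2]]
  -- apply the covering-dimension hypothesis and merge the refinement by labels
  obtain ⟨κ, Vc, hVopen, hVcover, href, hord⟩ := hdim (Fin N) U hUopen hUcover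
  choose ch hch using href
  set Y : Fin N → Set X := fun k => ⋃ (j : κ) (_ : ch j = k), Vc j with hYdef
  have hYopen : ∀ k, IsOpen (Y k) := fun k =>
    isOpen_iUnion fun j => isOpen_iUnion fun _ => hVopen j
  have hYsub : ∀ k, Y k ⊆ U k := fun k =>
    Set.iUnion₂_subset fun j hj => hj ▸ hch j
  have hYcover : ⋃ k, Y k = Set.univ := by
    refine Set.eq_univ_of_forall fun x => ?_
    have := Set.eq_univ_iff_forall.1 hVcover x
    obtain ⟨j, hj⟩ := Set.mem_iUnion.1 this
    exact Set.mem_iUnion.2 ⟨ch j, Set.mem_iUnion₂.2 ⟨j, rfl, hj⟩⟩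
  have hYord : ∀ x, (Finset.univ.filter fun k => x ∈ Y k).card ≤ n + 1 := by
    intro x
    obtain ⟨hfin, hncard⟩ := hord x
    have hsub : {k | x ∈ Y k} ⊆ ch '' {j | x ∈ Vc j} := by
      intro k hk
      obtain ⟨j, hj, hx⟩ := Set.mem_iUnion₂.1 hk
      exact ⟨j, hx, hj⟩
    calc (Finset.univ.filter fun k => x ∈ Y k).card
        = {k | x ∈ Y k}.ncard := by
          rw [← Set.ncard_coe_finset]
          congr 1
          ext k; simp
      _ ≤ (ch '' {j | x ∈ Vc j}).ncard := Set.ncard_le_ncard hsub (hfin.image ch)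
      _ ≤ {j | x ∈ Vc j}.ncard := Set.ncard_image_le hfin
      _ ≤ n + 1 := hncard
  -- shrink the cover and take Urysohn functions
  obtain ⟨Z, hZcover, hZopen, hZsub⟩ :=
    exists_iUnion_eq_closure_subset hYopen (fun x => Set.toFinite _) hYcover
  have hUry : ∀ k, ∃ φ : C(X, ℝ), Set.EqOn φ 0 ((Y k)ᶜ) ∧ Set.EqOn φ 1 (closure (Z k)) ∧
      ∀ x, φ x ∈ Set.Icc (0 : ℝ) 1 := by
    intro k
    refine exists_continuous_zero_one_of_isClosed (isClosed_compl_iff.2 (hYopen k))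
      isClosed_closure ?_
    exact Set.disjoint_left.2 fun x hx hx2 => hx (hZsub k hx2)
  choose φ hφ0 hφ1 hφ01 using hUry
  -- generic vectors for the nerve
  obtain ⟨w, hw0, hw2, hwsum⟩ := exists_generic_vectors' n N lab
  -- the auxiliary map `h`
  set h : X → (Fin (n + 1) → ℝ) := fun x => ∑ k, φ k x • w k with hhdef
  have hh : Continuous h := continuous_finset_sum _ fun k _ => ((φ k).continuous).smul continuous_const
  have happly : ∀ x i, h x i = ∑ k, φ k x * w k i := by
    intro x i
    rw [hhdef]
    simp [Finset.sum_apply]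
  have hYmem : ∀ k x, φ k x ≠ 0 → x ∈ Y k := by
    intro k x hk
    by_contra hx
    exact hk (hφ0 k hx)
  have hkey : ∀ x, h x ≠ 0 := by
    intro x
    refine hwsum (fun k => φ k x) (fun k => (hφ01 k x).1) ?_ ?_
    · have := Set.eq_univ_iff_forall.1 hZcover x
      obtain ⟨k, hk⟩ := Set.mem_iUnion.1 this
      exact ⟨k, by show φ k x ≠ 0; rw [hφ1 k (subset_closure hk)]; simp⟩
    · refine le_trans (Finset.card_le_card ?_) (hYord x)
      intro k hk
      simp only [Finset.mem_filter, Finset.mem_univ, true_and] at hk ⊢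
      exact hYmem k x hk
  -- sign control of `h`
  have hsignA : ∀ x i, f x i ≤ -ε x → h x i ≤ 0 := by
    intro x i hfx
    rw [happly x i]
    refine Finset.sum_nonpos fun k _ => ?_
    by_cases hk : φ k x = 0
    · rw [hk, zero_mul]
    · have hxY : x ∈ Y k := hYmem k x hk
      have hxT : x ∈ T (lab k i) i := by
        have hxU := hYsub k hxY
        rw [hUdef] at hxU
        exact Set.mem_iInter.1 hxU i
      have hl : lab k i = 0 := hTneg x i _ hxT hfx
      exact mul_nonpos_iff.2 (Or.inl ⟨(hφ01 k x).1, le_of_lt (hw0 k i hl)⟩)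
  have hsignB : ∀ x i, ε x ≤ f x i → 0 ≤ h x i := by
    intro x i hfx
    rw [happly x i]
    refine Finset.sum_nonneg fun k _ => ?_
    by_cases hk : φ k x = 0
    · rw [hk, zero_mul]
    · have hxY : x ∈ Y k := hYmem k x hk
      have hxT : x ∈ T (lab k i) i := by
        have hxU := hYsub k hxY
        rw [hUdef] at hxU
        exact Set.mem_iInter.1 hxU i
      have hl : lab k i = 2 := hTpos x i _ hxT hfx
      exact mul_nonneg (hφ01 k x).1 (le_of_lt (hw2 k i hl))
  -- the perturbed map
  set H : Fin (n + 1) → X → ℝ := fun i x => max (-1) (min 1 (h x i)) with hHdef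
  set mid : Fin (n + 1) → X → ℝ := fun i x => max (-ε x) (min (ε x) (f x i)) with hmiddef
  set g0 : X → Fin (n + 1) → ℝ := fun x i => f x i - mid i x + ε x * H i x with hg0def
  set g : X → EuclideanSpace ℝ (Fin (n + 1)) :=
    fun x => (WithLp.equiv 2 (Fin (n + 1) → ℝ)).symm (g0 x) with hgdef
  have hgapply : ∀ x i, g x i = g0 x i := fun x i => rfl
  have hHc : ∀ i, Continuous fun x => H i x := fun i =>
    continuous_const.max (continuous_const.min ((continuous_apply i).comp hh))
  have hmidc : ∀ i, Continuous fun x => mid i x := fun i =>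
    (hε.neg).max (hε.min (hfi i))
  have hg0c : Continuous g0 := continuous_pi fun i => ((hfi i).sub (hmidc i)).add (hε.mul (hHc i))
  have hgc : Continuous g := (PiLp.continuous_toLp 2 fun _ : Fin (n + 1) => ℝ).comp hg0c
  have hHbd : ∀ i x, -1 ≤ H i x ∧ H i x ≤ 1 := fun i x =>
    ⟨le_max_left _ _, max_le (by norm_num) (min_le_left _ _)⟩
  have hmidbd : ∀ i x, -ε x ≤ mid i x ∧ mid i x ≤ ε x := fun i x =>
    ⟨le_max_left _ _, max_le (by linarith [hεpos x]) (min_le_left _ _)⟩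
  refine ⟨g, hgc, fun x => ⟨?_, ?_⟩⟩
  · -- the norm estimate
    have hcoord : ∀ i, ‖(g x - f x) i‖ ≤ 2 * ε x := by
      intro i
      have h1 : (g x - f x) i = ε x * H i x - mid i x := by
        rw [PiLp.sub_apply, hgapply]
        show f x i - mid i x + ε x * H i x - f x i = _
        ring
      rw [h1, Real.norm_eq_abs, abs_le]
      have h2 := hHbd i x
      have h3 := hmidbd i x
      constructor <;> nlinarith [hεpos x, h2.1, h2.2, h3.1, h3.2]
    have hsq : ∀ i : Fin (n + 1), ‖(g x - f x) i‖ ^ 2 ≤ (2 * ε x) ^ 2 := fun i =>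
      pow_le_pow_left₀ (norm_nonneg _) (hcoord i) 2
    calc ‖g x - f x‖ = Real.sqrt (∑ i, ‖(g x - f x) i‖ ^ 2) := EuclideanSpace.norm_eq _
      _ ≤ Real.sqrt (∑ _i : Fin (n + 1), (2 * ε x) ^ 2) :=
          Real.sqrt_le_sqrt (Finset.sum_le_sum fun i _ => hsq i)
      _ = Real.sqrt ((n + 1 : ℝ) * (2 * ε x) ^ 2) := by
          rw [Finset.sum_const, Finset.card_univ, Fintype.card_fin, nsmul_eq_mul]
          push_cast
          ring_nf
      _ = Real.sqrt (n + 1 : ℝ) * (2 * ε x) := by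
          rw [Real.sqrt_mul (by positivity), Real.sqrt_sq (by linarith [hεpos x])]
      _ = 2 * Real.sqrt (n + 1) * ε x := by push_cast; ring
  · -- avoiding zero
    intro h0
    rw [hgdef] at h0
    have h0' : g0 x = 0 := by
      have h1 := congrArg (⇑(WithLp.equiv 2 (Fin (n + 1) → ℝ))) h0
      rwa [Equiv.apply_symm_apply] at h1
    have hg0i : ∀ i, g0 x i = 0 := fun i => congrFun h0' i
    have hex : ∃ i, h x i ≠ 0 := by
      by_contra hno
      push_neg at hno
      exact hkey x (funext hno)
    obtain ⟨i, hi⟩ := hex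
    rcases lt_or_gt_of_ne hi with hneg | hpos
    · -- `h x i < 0` gives `g0 x i < 0`
      have hH : H i x < 0 := by
        have h5 : min 1 (h x i) = h x i :=
          min_eq_right (le_of_lt (lt_of_lt_of_le hneg zero_le_one))
        show max (-1 : ℝ) (min 1 (h x i)) < 0
        rw [h5]
        exact max_lt (by norm_num) hneg
      have hfle : f x i ≤ ε x := by
        by_contra hgt
        push_neg at hgt
        exact absurd (hsignB x i (le_of_lt hgt)) (not_le.2 hneg)
      have hmidge : f x i ≤ mid i x := by
        show f x i ≤ max (-ε x) (min (ε x) (f x i))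
        exact le_max_of_le_right (le_min hfle le_rfl)
      have hεH : ε x * H i x < 0 := mul_neg_of_pos_of_neg (hεpos x) hH
      have : g0 x i < 0 := by
        show f x i - mid i x + ε x * H i x < 0
        linarith
      exact absurd (hg0i i) (ne_of_lt this)
    · -- `h x i > 0` gives `g0 x i > 0`
      have hH : 0 < H i x := by
        have h5 : (0 : ℝ) < min 1 (h x i) := lt_min (by norm_num) hpos
        show (0 : ℝ) < max (-1) (min 1 (h x i))
        exact lt_of_lt_of_le h5 (le_max_right _ _)
      have hfge : -ε x ≤ f x i := by
        by_contra hlt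
        push_neg at hlt
        exact absurd (hsignA x i (le_of_lt hlt)) (not_le.2 hpos)
      have hmidle : mid i x ≤ f x i := by
        show max (-ε x) (min (ε x) (f x i)) ≤ f x i
        exact max_le hfge (min_le_right _ _)
      have hεH : 0 < ε x * H i x := mul_pos (hεpos x) hH
      have : 0 < g0 x i := by
        show 0 < f x i - mid i x + ε x * H i x
        linarith
      exact absurd (hg0i i) (ne_of_gt this)
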